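/- arXiv:0707.4029 — 2 statements merged into one kernel-verified Lean document; each statement's English description precedes it below -/
import Mathlib

section
/- In B₂, with e₁₂ = (e₁e₂ - q e₂e₁)/(q⁻¹-q) and ẽ₁₂ = (e₂e₁ - q e₁e₂)/(q⁻¹-q), one has the commutation relation e₁₂ ẽ₁₂ = ẽ₁₂ e₁₂, i.e. e₁₂ and ẽ₁₂ commute. -/
/-- In the algebra `B₂` generated by `e₁, e₂` subject to the `q`-Serre relations
(equivalently, for any elements of any `K`-algebra satisfying them), with
`e₁₂ = (e₁e₂ - q e₂e₁)/(q⁻¹ - q)` and `ẽ₁₂ = (e₂e₁ - q e₁e₂)/(q⁻¹ - q)`: -/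
theorem serre_e12_et12_comm {K : Type*} [Field K] {A : Type*} [Ring A] [Algebra K A]
    (q : K) (hq : q ≠ 0) (hq' : q⁻¹ - q ≠ 0) (e₁ e₂ : A)
    (serre₁ : e₁ ^ 2 * e₂ + e₂ * e₁ ^ 2 = (q⁻¹ + q) • (e₁ * e₂ * e₁))
    (serre₂ : e₂ ^ 2 * e₁ + e₁ * e₂ ^ 2 = (q⁻¹ + q) • (e₂ * e₁ * e₂)) :
    let e₁₂ : A := (q⁻¹ - q)⁻¹ • (e₁ * e₂ - q • (e₂ * e₁))
    let et₁₂ : A := (q⁻¹ - q)⁻¹ • (e₂ * e₁ - q • (e₁ * e₂))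
    e₁₂ * et₁₂ = et₁₂ * e₁₂ := by
  intro e₁₂ et₁₂
  have key : e₁ * e₂ ^ 2 * e₁ + e₁ ^ 2 * e₂ ^ 2 = e₂ * e₁ ^ 2 * e₂ + e₁ ^ 2 * e₂ ^ 2 := by
    rw [show e₁ * e₂ ^ 2 * e₁ + e₁ ^ 2 * e₂ ^ 2 = e₁ * (e₂ ^ 2 * e₁ + e₁ * e₂ ^ 2) by
          noncomm_ring,
        show e₂ * e₁ ^ 2 * e₂ + e₁ ^ 2 * e₂ ^ 2 = (e₁ ^ 2 * e₂ + e₂ * e₁ ^ 2) * e₂ by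
          noncomm_ring,
        serre₁, serre₂, mul_smul_comm, smul_mul_assoc]
    noncomm_ring
  have h : e₁ * e₂ ^ 2 * e₁ = e₂ * e₁ ^ 2 * e₂ := add_right_cancel key
  have hXY : (e₁ * e₂ - q • (e₂ * e₁)) * (e₂ * e₁ - q • (e₁ * e₂))
      = (e₂ * e₁ - q • (e₁ * e₂)) * (e₁ * e₂ - q • (e₂ * e₁)) := by
    simp only [mul_sub, sub_mul, smul_mul_assoc, mul_smul_comm, smul_smul]
    rw [show e₁ * e₂ * (e₂ * e₁) = e₁ * e₂ ^ 2 * e₁ by noncomm_ring,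
        show e₂ * e₁ * (e₁ * e₂) = e₂ * e₁ ^ 2 * e₂ by noncomm_ring, h]
    simp only [smul_add, smul_sub]
    abel
  show ((q⁻¹ - q)⁻¹ • (e₁ * e₂ - q • (e₂ * e₁))) * ((q⁻¹ - q)⁻¹ • (e₂ * e₁ - q • (e₁ * e₂)))
      = ((q⁻¹ - q)⁻¹ • (e₂ * e₁ - q • (e₁ * e₂))) * ((q⁻¹ - q)⁻¹ • (e₁ * e₂ - q • (e₂ * e₁)))
  rw [smul_mul_assoc, smul_mul_assoc, mul_smul_comm, mul_smul_comm, hXY]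
end

section
/- In B₂, the identity e₁ ẽ₁₂^{m₂} e₂^{m₃} = q^{m₂}[m₃] ẽ₁₂^{m₂} e₂^{m₃-1} e₁₂ + q^{m₂+m₃} ẽ₁₂^{m₂} e₂^{m₃} e₁ holds for all m₂ ≥ 0 and m₃ ≥ 1, where [n] = q^{-n} - q^n. -/
theorem serre_key_recursion {K : Type*} [Field K] {A : Type*} [Ring A] [Algebra K A]
    (q : K) (hq : q ≠ 0) (hq' : q⁻¹ - q ≠ 0) (e₁ e₂ : A)
    (serre₁ : e₁ ^ 2 * e₂ + e₂ * e₁ ^ 2 = (q⁻¹ + q) • (e₁ * e₂ * e₁))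
    (serre₂ : e₂ ^ 2 * e₁ + e₁ * e₂ ^ 2 = (q⁻¹ + q) • (e₂ * e₁ * e₂)) :
    let e₁₂ : A := (q⁻¹ - q)⁻¹ • (e₁ * e₂ - q • (e₂ * e₁))
    let et₁₂ : A := (q⁻¹ - q)⁻¹ • (e₂ * e₁ - q • (e₁ * e₂))
    ∀ (m₂ m₃ : ℕ), 1 ≤ m₃ →
      e₁ * et₁₂ ^ m₂ * e₂ ^ m₃ =
        (q ^ m₂ * (q ^ (-(m₃ : ℤ)) - q ^ (m₃ : ℤ))) • (et₁₂ ^ m₂ * e₂ ^ (m₃ - 1) * e₁₂)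
          + q ^ (m₂ + m₃) • (et₁₂ ^ m₂ * e₂ ^ m₃ * e₁) := by
  intro e₁₂ et₁₂ m₂ m₃ hm₃
  have he : e₁₂ = (q⁻¹ - q)⁻¹ • (e₁ * e₂ - q • (e₂ * e₁)) := rfl
  have het : et₁₂ = (q⁻¹ - q)⁻¹ • (e₂ * e₁ - q • (e₁ * e₂)) := rfl
  have hs₁ : e₂ * (e₁ * e₁) = (q⁻¹ + q) • (e₁ * (e₂ * e₁)) - e₁ * (e₁ * e₂) := by
    rw [eq_sub_iff_add_eq, add_comm]
    simpa only [sq, mul_assoc] using serre₁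
  have hs₂ : e₁ * (e₂ * e₂) = (q⁻¹ + q) • (e₂ * (e₁ * e₂)) - e₂ * (e₂ * e₁) := by
    rw [eq_sub_iff_add_eq, add_comm]
    simpa only [sq, mul_assoc] using serre₂
  have h1 : e₁ * et₁₂ = q • (et₁₂ * e₁) := by
    rw [het, mul_smul_comm, smul_mul_assoc, smul_comm q]
    congr 1
    simp only [mul_sub, sub_mul, mul_smul_comm, smul_mul_assoc, smul_sub, smul_smul, mul_assoc]
    rw [hs₁]
    match_scalars <;> field_simp <;> ring
  have h2 : e₁₂ * e₂ = q⁻¹ • (e₂ * e₁₂) := by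
    rw [he, mul_smul_comm, smul_mul_assoc, smul_comm q⁻¹]
    congr 1
    simp only [mul_sub, sub_mul, mul_smul_comm, smul_mul_assoc, smul_sub, smul_smul, mul_assoc]
    rw [hs₂]
    match_scalars <;> field_simp <;> ring
  have h3 : e₁ * e₂ = (q⁻¹ - q) • e₁₂ + q • (e₂ * e₁) := by
    rw [he, smul_smul, mul_inv_cancel₀ hq', one_smul, sub_add_cancel]
  have L1 : ∀ m, e₁ * et₁₂ ^ m = (q ^ m) • (et₁₂ ^ m * e₁) := by
    intro m
    induction m with
    | zero => simp
    | succ n ih =>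
      rw [pow_succ, ← mul_assoc, ih, smul_mul_assoc, mul_assoc, h1, mul_smul_comm,
        smul_smul, ← mul_assoc, pow_succ]
  have L2 : ∀ n : ℕ, e₁ * e₂ ^ (n + 1) =
      ((q⁻¹) ^ (n + 1) - q ^ (n + 1)) • (e₂ ^ n * e₁₂) + q ^ (n + 1) • (e₂ ^ (n + 1) * e₁) := by
    intro n
    induction n with
    | zero => simpa using h3
    | succ n ih =>
      have : e₁ * e₂ ^ (n + 2) = (e₁ * e₂ ^ (n + 1)) * e₂ := by
        rw [mul_assoc, ← pow_succ]
      rw [this, ih, add_mul, smul_mul_assoc, smul_mul_assoc, mul_assoc, h2, mul_assoc, h3]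
      simp only [mul_add, smul_add, mul_smul_comm, smul_smul, ← mul_assoc, ← pow_succ]
      match_scalars <;> simp only [inv_pow] <;> field_simp <;> ring
  obtain ⟨k, rfl⟩ : ∃ k, m₃ = k + 1 := ⟨m₃ - 1, (Nat.succ_pred_eq_of_pos hm₃).symm⟩
  have hz : ∀ n : ℕ, q ^ (-(n : ℤ)) = (q⁻¹) ^ n := by
    intro n; rw [zpow_neg, zpow_natCast, inv_pow]
  rw [L1 m₂, smul_mul_assoc, mul_assoc, L2 k]
  simp only [mul_add, smul_add, mul_smul_comm, smul_smul, ← mul_assoc, Nat.add_sub_cancel,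
    hz, zpow_natCast]
  match_scalars <;> field_simp <;> ring
end
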